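/- For fixed x, y ∈ [π/3, π/2] with cos x + cos y ≥ 1/2 (so that arccos(cos x + cos y − 1) ≤ 2π/3), the function g(z) = tan((x + y + z)/4)·tan((x + y − z)/4)·tan((z + x − y)/4)·tan((z + y − x)/4) is decreasing in z on the interval [arccos(cos x + cos y − 1), 2π/3]. -/

import Mathlib

open Real

private lemma tan_mul_tan' (A B : ℝ) (hA : Real.cos A ≠ 0) (hB : Real.cos B ≠ 0) :
    Real.tan A * Real.tan B =
      (Real.cos (A - B) - Real.cos (A + B)) / (Real.cos (A - B) + Real.cos (A + B)) := by
  have h1 : Real.cos (A - B) - Real.cos (A + B) = 2 * (Real.sin A * Real.sin B) := by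
    rw [Real.cos_sub, Real.cos_add]; ring
  have h2 : Real.cos (A - B) + Real.cos (A + B) = 2 * (Real.cos A * Real.cos B) := by
    rw [Real.cos_sub, Real.cos_add]; ring
  rw [h1, h2, Real.tan_eq_sin_div_cos, Real.tan_eq_sin_div_cos]
  field_simp

private lemma key_ineq (a b u v : ℝ) (ha : 0 < a) (hb : 0 < b) (hu : 0 < u) (huv : u < v)
    (hp : v * v ≤ a * b) :
    (u - a) / (u + a) * ((b - u) / (b + u)) < (v - a) / (v + a) * ((b - v) / (b + v)) := by
  have hv : 0 < v := hu.trans huv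
  have habuv : 0 < a * b - u * v := by nlinarith
  rw [div_mul_div_comm, div_mul_div_comm,
    div_lt_div_iff₀ (by positivity) (by positivity)]
  nlinarith [mul_pos (mul_pos (add_pos ha hb) (sub_pos.2 huv)) habuv]

private lemma g_eq (x y z : ℝ) (hx1 : π / 3 ≤ x) (hx2 : x ≤ π / 2) (hy1 : π / 3 ≤ y)
    (hy2 : y ≤ π / 2) (hz0 : 0 ≤ z) (hz : z ≤ 2 * π / 3) :
    Real.tan ((x + y + z) / 4) * Real.tan ((x + y - z) / 4) *
      Real.tan ((z + x - y) / 4) * Real.tan ((z + y - x) / 4) =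
    (Real.cos (z / 2) - Real.cos ((x + y) / 2)) / (Real.cos (z / 2) + Real.cos ((x + y) / 2)) *
      ((Real.cos ((x - y) / 2) - Real.cos (z / 2)) /
        (Real.cos ((x - y) / 2) + Real.cos (z / 2))) := by
  have hπ : (0 : ℝ) < π := Real.pi_pos
  have hA1 : Real.cos ((x + y + z) / 4) ≠ 0 :=
    ne_of_gt (Real.cos_pos_of_mem_Ioo ⟨by linarith, by linarith⟩)
  have hB1 : Real.cos ((x + y - z) / 4) ≠ 0 :=
    ne_of_gt (Real.cos_pos_of_mem_Ioo ⟨by linarith, by linarith⟩)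
  have hA2 : Real.cos ((z + x - y) / 4) ≠ 0 :=
    ne_of_gt (Real.cos_pos_of_mem_Ioo ⟨by linarith, by linarith⟩)
  have hB2 : Real.cos ((z + y - x) / 4) ≠ 0 :=
    ne_of_gt (Real.cos_pos_of_mem_Ioo ⟨by linarith, by linarith⟩)
  have e1 := tan_mul_tan' ((x + y + z) / 4) ((x + y - z) / 4) hA1 hB1
  rw [show (x + y + z) / 4 - (x + y - z) / 4 = z / 2 by ring,
    show (x + y + z) / 4 + (x + y - z) / 4 = (x + y) / 2 by ring] at e1
  have e2 := tan_mul_tan' ((z + x - y) / 4) ((z + y - x) / 4) hA2 hB2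
  rw [show (z + x - y) / 4 - (z + y - x) / 4 = (x - y) / 2 by ring,
    show (z + x - y) / 4 + (z + y - x) / 4 = z / 2 by ring] at e2
  rw [mul_assoc, e1, e2]

/-- For fixed `x, y ∈ [π/3, π/2]` with `cos x + cos y ≥ 1/2` (so that
`arccos (cos x + cos y − 1) ≤ 2π/3`), the function
`g(z) = tan((x+y+z)/4)·tan((x+y−z)/4)·tan((z+x−y)/4)·tan((z+y−x)/4)` is decreasing in `z`
on the interval `[arccos (cos x + cos y − 1), 2π/3]`. -/
theorem lhuilier_strict_anti (x y : ℝ)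
    (hx : x ∈ Set.Icc (π / 3) (π / 2)) (hy : y ∈ Set.Icc (π / 3) (π / 2))
    (hcos : 1 / 2 ≤ cos x + cos y) :
    StrictAntiOn
      (fun z : ℝ => tan ((x + y + z) / 4) * tan ((x + y - z) / 4) *
        tan ((z + x - y) / 4) * tan ((z + y - x) / 4))
      (Set.Icc (arccos (cos x + cos y - 1)) (2 * π / 3)) := by
  obtain ⟨hx1, hx2⟩ := hx
  obtain ⟨hy1, hy2⟩ := hy
  have hπ : (0 : ℝ) < π := Real.pi_pos
  set a := Real.cos ((x + y) / 2) with ha_def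
  set b := Real.cos ((x - y) / 2) with hb_def
  have hab : Real.cos x + Real.cos y = 2 * a * b := Real.cos_add_cos x y
  have hb : 0 < b := Real.cos_pos_of_mem_Ioo ⟨by linarith, by linarith⟩
  have ha0 : 0 ≤ a := Real.cos_nonneg_of_mem_Icc ⟨by linarith, by linarith⟩
  have hb1 : b ≤ 1 := Real.cos_le_one _
  have ha1 : a ≤ 1 := Real.cos_le_one _
  have ha : 0 < a := by nlinarith [mul_nonneg ha0 (sub_nonneg.2 hb1)]
  have hcz0 : Real.cos (arccos (Real.cos x + Real.cos y - 1)) =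
      Real.cos x + Real.cos y - 1 :=
    Real.cos_arccos (by nlinarith) (by nlinarith [Real.cos_le_one x, Real.cos_le_one y])
  intro z₁ hz₁ z₂ hz₂ h12
  have hz₁0 : 0 ≤ z₁ := le_trans (Real.arccos_nonneg _) hz₁.1
  have hz₂0 : 0 ≤ z₂ := le_trans hz₁0 h12.le
  have hz₂2 : z₂ ≤ 2 * π / 3 := hz₂.2
  have hz₁2 : z₁ ≤ 2 * π / 3 := le_trans h12.le hz₂2
  simp only
  rw [g_eq x y z₁ hx1 hx2 hy1 hy2 hz₁0 hz₁2, g_eq x y z₂ hx1 hx2 hy1 hy2 hz₂0 hz₂2]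
  apply key_ineq a b _ _ ha hb
  · exact Real.cos_pos_of_mem_Ioo ⟨by linarith, by linarith⟩
  · exact Real.cos_lt_cos_of_nonneg_of_le_pi (by linarith) (by linarith) (by linarith)
  · have h1 : Real.cos z₁ ≤ Real.cos x + Real.cos y - 1 := by
      rw [← hcz0]
      exact Real.cos_le_cos_of_nonneg_of_le_pi (Real.arccos_nonneg _) (by linarith) hz₁.1
    have h2 : Real.cos (z₁ / 2) ^ 2 = 1 / 2 + Real.cos (2 * (z₁ / 2)) / 2 := Real.cos_sq _
    rw [show 2 * (z₁ / 2) = z₁ by ring] at h2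
    nlinarith [h2]
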